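/- An M*₂,₂-circuit has at least 5 vertices, and the graph K₅ minus one edge is an M*₂,₂-circuit. -/

import Mathlib

open scoped Classical

/-- The set of vertices incident to some edge in `F`. -/
def edgeVerts {V : Type*} (F : Set (Sym2 V)) : Set V := {v | ∃ e ∈ F, v ∈ e}

/-- Independence in the simple (2,2)-sparse matroid. -/
def Sparse22 {V : Type*} (F : Set (Sym2 V)) : Prop :=
  ∀ F' ⊆ F, F'.Nonempty →
    ((F'.ncard : ℤ) ≤ 2 * (edgeVerts F').ncard - 2 ∧
      (F'.ncard = 2 → (F'.ncard : ℤ) < 2 * (edgeVerts F').ncard - 2))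

/-- `G` is an `M*₂,₂`-circuit. -/
def M22Circuit {V : Type*} [Fintype V] (G : SimpleGraph V) : Prop :=
  (G.edgeSet.ncard : ℤ) = 2 * Fintype.card V - 1 ∧
  (∀ F ⊂ G.edgeSet, Sparse22 F) ∧
  ¬ Sparse22 G.edgeSet


/-- `K₅` minus one edge, on `Fin 5`. -/
def K5e : SimpleGraph (Fin 5) := (⊤ : SimpleGraph (Fin 5)).deleteEdges {s(0, 1)}

/-- the 9 edges of `K5e` -/
def E9 : Finset (Sym2 (Fin 5)) :=
  {s(0,2), s(0,3), s(0,4), s(1,2), s(1,3), s(1,4), s(2,3), s(2,4), s(3,4)}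

lemma mem_edgeVerts_left {V : Type*} {F : Set (Sym2 V)} {x y : V} (h : s(x, y) ∈ F) :
    x ∈ edgeVerts F := ⟨s(x, y), h, Sym2.mem_mk_left x y⟩

lemma mem_edgeVerts_right {V : Type*} {F : Set (Sym2 V)} {x y : V} (h : s(x, y) ∈ F) :
    y ∈ edgeVerts F := ⟨s(x, y), h, Sym2.mem_mk_right x y⟩

/-- An edge set without loops has at most `|V(F)| choose 2` edges. -/
lemma count_le {V : Type*} [Fintype V] [DecidableEq V] (F : Set (Sym2 V))
    (hnd : ∀ e ∈ F, ¬ e.IsDiag) :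
    F.ncard ≤ (edgeVerts F).ncard.choose 2 := by
  have h1 : F.toFinset ⊆ (edgeVerts F).toFinset.offDiag.image Sym2.mk.uncurry := by
    intro e he
    rw [Set.mem_toFinset] at he
    induction e using Sym2.ind with
    | _ x y =>
      refine Finset.mem_image.2 ⟨(x, y), ?_, rfl⟩
      rw [Finset.mem_offDiag]
      refine ⟨?_, ?_, ?_⟩
      · rw [Set.mem_toFinset]; exact mem_edgeVerts_left he
      · rw [Set.mem_toFinset]; exact mem_edgeVerts_right he
      · intro h
        simp only at h
        exact hnd _ he (by simp [h])
  calc F.ncard = F.toFinset.card := Set.ncard_eq_toFinset_card' F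
    _ ≤ _ := Finset.card_le_card h1
    _ = (edgeVerts F).toFinset.card.choose 2 := Sym2.card_image_offDiag _
    _ = (edgeVerts F).ncard.choose 2 := by rw [← Set.ncard_eq_toFinset_card']

lemma two_le_verts {V : Type*} [Fintype V] (F : Set (Sym2 V))
    (hnd : ∀ e ∈ F, ¬ e.IsDiag) (hne : F.Nonempty) :
    2 ≤ (edgeVerts F).ncard := by
  obtain ⟨e, he⟩ := hne
  induction e using Sym2.ind with
  | _ x y =>
    have hxy : x ≠ y := by
      intro h; exact hnd _ he (by simp [h])
    have hsub : ({x, y} : Set V) ⊆ edgeVerts F := by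
      rintro v (rfl | rfl)
      · exact mem_edgeVerts_left he
      · exact mem_edgeVerts_right he
    calc 2 = ({x, y} : Set V).ncard := (Set.ncard_pair hxy).symm
      _ ≤ (edgeVerts F).ncard := Set.ncard_le_ncard hsub (Set.toFinite _)

lemma three_le_verts {V : Type*} [Fintype V] (F : Set (Sym2 V))
    (hnd : ∀ e ∈ F, ¬ e.IsDiag) (h2 : F.ncard = 2) :
    3 ≤ (edgeVerts F).ncard := by
  obtain ⟨a, b, hab, rfl⟩ := Set.ncard_eq_two.1 h2
  by_contra hlt
  push_neg at hlt
  induction a using Sym2.ind with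
  | _ x y =>
    induction b using Sym2.ind with
    | _ z w =>
      have ha : s(x, y) ∈ ({s(x, y), s(z, w)} : Set (Sym2 V)) := by simp
      have hb : s(z, w) ∈ ({s(x, y), s(z, w)} : Set (Sym2 V)) := by simp
      have hxy : x ≠ y := by intro h; exact hnd _ ha (by simp [h])
      have hzw : z ≠ w := by intro h; exact hnd _ hb (by simp [h])
      have hsub : ({x, y} : Set V) ⊆ edgeVerts {s(x, y), s(z, w)} := by
        rintro v (rfl | rfl)
        · exact mem_edgeVerts_left ha
        · exact mem_edgeVerts_right ha
      have hcard2 : ({x, y} : Set V).ncard = 2 := Set.ncard_pair hxy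
      have heq : ({x, y} : Set V) = edgeVerts {s(x, y), s(z, w)} := by
        apply Set.eq_of_subset_of_ncard_le hsub _ (Set.toFinite _)
        omega
      have hz : z ∈ ({x, y} : Set V) := heq ▸ mem_edgeVerts_left hb
      have hw : w ∈ ({x, y} : Set V) := heq ▸ mem_edgeVerts_right hb
      apply hab
      rcases hz with rfl | rfl <;> rcases hw with rfl | rfl
      · exact absurd rfl hzw
      · rfl
      · exact Sym2.eq_swap.symm
      · exact absurd rfl hzw

lemma K5e_edgeSet : K5e.edgeSet = ↑E9 := by
  ext e
  induction e using Sym2.ind with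
  | _ x y =>
    rw [SimpleGraph.mem_edgeSet]
    show K5e.Adj x y ↔ s(x, y) ∈ (E9 : Set (Sym2 (Fin 5)))
    rw [Finset.mem_coe]
    simp only [K5e, SimpleGraph.deleteEdges_adj, SimpleGraph.top_adj,
      Set.mem_singleton_iff]
    revert x y
    decide

lemma K5e_edgeVerts : edgeVerts (↑E9 : Set (Sym2 (Fin 5))) = Set.univ := by
  ext v
  simp only [Set.mem_univ, iff_true, edgeVerts, Set.mem_setOf_eq]
  fin_cases v
  · exact ⟨s(0,2), by decide, by decide⟩
  · exact ⟨s(1,2), by decide, by decide⟩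
  · exact ⟨s(0,2), by decide, by decide⟩
  · exact ⟨s(0,3), by decide, by decide⟩
  · exact ⟨s(0,4), by decide, by decide⟩

/-- An `M*₂,₂`-circuit has at least 5 vertices, and `K₅` minus an edge is an
`M*₂,₂`-circuit. -/
theorem m22Circuit_card_ge_five_and_K5e :
    (∀ (V : Type) [Fintype V] (G : SimpleGraph V), M22Circuit G → 5 ≤ Fintype.card V) ∧
    M22Circuit K5e := by
  constructor
  · intro V _ G hG
    obtain ⟨hcard, -, -⟩ := hG
    have hle : G.edgeSet.ncard ≤ (Fintype.card V).choose 2 := by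
      calc G.edgeSet.ncard = G.edgeFinset.card := by
            rw [Set.ncard_eq_toFinset_card' G.edgeSet]
            exact congrArg Finset.card (by ext e; simp)
        _ ≤ (Fintype.card V).choose 2 := SimpleGraph.card_edgeFinset_le_card_choose_two
    by_contra hlt
    push_neg at hlt
    set n := Fintype.card V with hn
    interval_cases n <;> simp_all [Nat.choose, -Set.ncard_le_one_iff_subsingleton] <;> omega
  · have hE : K5e.edgeSet = ↑E9 := K5e_edgeSet
    have hE9card : (↑E9 : Set (Sym2 (Fin 5))).ncard = 9 := by
      rw [Set.ncard_coe_finset]; decide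
    have hEV : (edgeVerts (↑E9 : Set (Sym2 (Fin 5)))).ncard = 5 := by
      rw [K5e_edgeVerts, Set.ncard_univ, Nat.card_eq_fintype_card, Fintype.card_fin]
    refine ⟨?_, ?_, ?_⟩
    · rw [hE, hE9card]
      simp
    · intro F hF F' hF' hne
      have hF'ss : F' ⊂ ↑E9 := by
        rw [← hE]
        exact lt_of_le_of_lt hF' hF
      have hndE : ∀ e ∈ (↑E9 : Set (Sym2 (Fin 5))), ¬ e.IsDiag := by
        rw [← hE]
        exact fun e he => K5e.not_isDiag_of_mem_edgeSet he
      have hnd : ∀ e ∈ F', ¬ e.IsDiag := fun e he => hndE e (hF'ss.1 he)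
      have hk8 : F'.ncard < 9 := by
        rw [← hE9card]
        exact Set.ncard_lt_ncard hF'ss (Finset.finite_toSet E9)
      have hkchoose : F'.ncard ≤ (edgeVerts F').ncard.choose 2 := count_le F' hnd
      have hv2 : 2 ≤ (edgeVerts F').ncard := two_le_verts F' hnd hne
      have hv5 : (edgeVerts F').ncard ≤ 5 := by
        have h := Set.ncard_le_ncard (Set.subset_univ (edgeVerts F')) (Set.toFinite _)
        simpa [Set.ncard_univ] using h
      constructor
      · set v := (edgeVerts F').ncard
        interval_cases v <;> simp_all [Nat.choose, -Set.ncard_le_one_iff_subsingleton] <;> omega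
      · intro h2
        have hv3 : 3 ≤ (edgeVerts F').ncard := three_le_verts F' hnd h2
        rw [h2]
        push_cast
        omega
    · intro hS
      obtain ⟨h1, -⟩ := hS K5e.edgeSet (le_refl _) (by rw [hE]; exact ⟨s(0,2), by decide⟩)
      rw [hE, hE9card, hEV] at h1
      norm_num at h1
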